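/- (Superlinear gain in supply) For every k ≥ 1 and ε ∈ (0, 1/k), there exists a k-buyer AVA instance I with all ρ_j = 1 such that OPT(I) ≤ 2 + kε, while the instance I' obtained by duplicating each item k times satisfies OPT(I') ≥ k·(k·(1−ε) + 1 + kε) ≥ k². Hence the k-fold increase in supply increases the optimal welfare by a factor of Ω(k²). -/

import Mathlib

/-- Feasibility for an AVA instance with unit thresholds (`ρ_j = 1`). -/
def unitFeasible {α : Type*} [Fintype α] [DecidableEq α] {k : ℕ}
    (w : α → Fin k → ℝ) (x : α → Option (Fin k)) : Prop :=
  ∀ j : Fin k, ((Finset.univ.filter fun a => x a = some j).card : ℝ) ≤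
    ∑ a ∈ Finset.univ.filter fun a => x a = some j, w a j

/-- Total value of an allocation. -/
def unitValue {α : Type*} [Fintype α] {k : ℕ}
    (w : α → Fin k → ℝ) (x : α → Option (Fin k)) : ℝ :=
  ∑ a, ((x a).map (w a)).getD 0

def myv (k : ℕ) (ε : ℝ) (i : Fin (k+1)) (j : Fin k) : ℝ :=
  if i.val = 0 then 1 + k*ε else if i.val = j.val + 1 then 1 - ε else 0

/-- Superlinear gain in supply: for every `k ≥ 1` and `ε ∈ (0, 1/k)` there is a
`k`-buyer unit-`ρ` AVA instance with `OPT ≤ 2 + kε`, while duplicating every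
item `k` times gives an instance with `OPT ≥ k(k(1-ε) + 1 + kε) ≥ k²`. -/
theorem stmt_6 : ∀ k : ℕ, 1 ≤ k → ∀ ε : ℝ, 0 < ε → ε < 1 / k →
    ∃ (n : ℕ) (v : Fin n → Fin k → ℝ),
      (∀ i j, 0 ≤ v i j) ∧
      (∀ x : Fin n → Option (Fin k), unitFeasible v x →
        unitValue v x ≤ 2 + k * ε) ∧
      (∃ x' : Fin n × Fin k → Option (Fin k),
        unitFeasible (fun ic : Fin n × Fin k => v ic.1) x' ∧
        (k : ℝ) * ((k : ℝ) * (1 - ε) + 1 + k * ε) ≤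
          unitValue (fun ic : Fin n × Fin k => v ic.1) x') ∧
      ((k : ℝ) ^ 2 ≤ (k : ℝ) * ((k : ℝ) * (1 - ε) + 1 + k * ε)) := by
  intro k hk ε hε hεk
  have hk0 : (1:ℝ) ≤ (k:ℝ) := by exact_mod_cast hk
  have hε1 : ε < 1 := lt_of_lt_of_le hεk (by
    rw [div_le_one (by linarith)]; exact hk0)
  have hkε : 0 ≤ (k:ℝ) * ε := by positivity
  refine ⟨k+1, myv k ε, ?_, ?_, ?_, ?_⟩
  · intro i j
    unfold myv
    split
    · linarith
    · split <;> linarith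
  · -- upper bound
    intro x hx
    have key : ∀ a : Fin (k+1), a.val ≠ 0 → ∀ j, x a = some j → x 0 = some j := by
      intro a ha j hxa
      by_contra h0
      have hfeas := hx j
      set S := Finset.univ.filter (fun b => x b = some j) with hS
      have haS : a ∈ S := by simp [hS, hxa]
      have h0S : (0 : Fin (k+1)) ∉ S := by simp [hS, h0]
      have ht : j.val + 1 < k + 1 := by omega
      set t : Fin (k+1) := ⟨j.val+1, ht⟩ with htdef
      have hsum : ∑ b ∈ S, myv k ε b j ≤ 1 - ε := by
        have hle : ∀ b ∈ S, myv k ε b j ≤ if b = t then 1-ε else 0 := by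
          intro b hb
          have hb0 : b.val ≠ 0 := by
            intro h
            exact h0S (by rwa [show (0 : Fin (k+1)) = b from (Fin.ext h.symm)])
          unfold myv
          rw [if_neg hb0]
          by_cases hbt : b = t
          · rw [if_pos hbt, if_pos (by rw [hbt])]
          · rw [if_neg hbt, if_neg (fun h => hbt (Fin.ext h))]
        calc ∑ b ∈ S, myv k ε b j ≤ ∑ b ∈ S, (if b = t then 1-ε else 0) :=
              Finset.sum_le_sum hle
          _ = if t ∈ S then 1-ε else 0 := Finset.sum_ite_eq' S t (fun _ => 1-ε)
          _ ≤ 1 - ε := by split <;> linarith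
      have hcard : 1 ≤ (S.card : ℝ) := by
        exact_mod_cast Finset.card_pos.mpr ⟨a, haS⟩
      linarith
    rcases h0 : x 0 with _ | j₀
    · -- item 0 unassigned: everything is 0
      have hz : unitValue (myv k ε) x = 0 := by
        unfold unitValue
        apply Finset.sum_eq_zero
        intro a _
        rcases ha : x a with _ | j
        · simp
        · by_cases ha0 : a.val = 0
          · exfalso
            have : a = 0 := Fin.ext ha0
            rw [this, h0] at ha; exact nomatch ha
          · exfalso
            have := key a ha0 j ha
            rw [h0] at this; exact nomatch this
      rw [hz]; linarith
    · have ht : j₀.val + 1 < k + 1 := by omega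
      set t : Fin (k+1) := ⟨j₀.val+1, ht⟩ with htdef
      have ht0 : t ≠ 0 := by
        intro h
        have := congrArg Fin.val h
        simp [htdef] at this
      have hbound : ∀ a : Fin (k+1),
          ((x a).map (myv k ε a)).getD 0 ≤
            (if a = 0 then 1 + k*ε else 0) + (if a = t then 1-ε else 0) := by
        intro a
        have hg0 : (0:ℝ) ≤ (if a = 0 then 1 + k*ε else 0) + (if a = t then 1-ε else 0) := by
          split <;> split <;> linarith
        rcases ha : x a with _ | j
        · simpa using hg0
        · simp only [Option.map_some, Option.getD_some]
          by_cases ha0 : a.val = 0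
          · have haeq : a = 0 := Fin.ext ha0
            have : myv k ε a j = 1 + k*ε := by unfold myv; rw [if_pos ha0]
            rw [this, haeq, if_pos rfl, if_neg (Ne.symm ht0)]
            linarith
          · have hj : j = j₀ := by
              have := key a ha0 j ha
              rw [h0] at this
              exact ((Option.some.injEq _ _).mp this).symm
            have hane : a ≠ 0 := fun h => ha0 (by rw [h]; rfl)
            rw [if_neg hane]
            by_cases hat : a = t
            · have : myv k ε a j = 1 - ε := by
                unfold myv
                rw [if_neg ha0, if_pos (by rw [hat, hj])]
              rw [this, if_pos hat]; linarith
            · have : myv k ε a j = 0 := by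
                unfold myv
                rw [if_neg ha0, if_neg (fun h => hat (by
                  apply Fin.ext; rw [h, hj]))]
              rw [this, if_neg hat]; linarith
      calc unitValue (myv k ε) x
          ≤ ∑ a : Fin (k+1), ((if a = 0 then 1 + k*ε else 0) + (if a = t then 1-ε else 0)) :=
            Finset.sum_le_sum (fun a _ => hbound a)
        _ = (1 + k*ε) + (1-ε) := by
            rw [Finset.sum_add_distrib, Finset.sum_ite_eq' _ _ (fun _ => 1+k*ε),
              Finset.sum_ite_eq' _ _ (fun _ => 1-ε)]
            simp
        _ ≤ 2 + k * ε := by linarith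
  · -- lower bound with duplication
    refine ⟨fun ic => if h : ic.1.val = 0 then some ic.2 else some ⟨ic.1.val - 1, by omega⟩, ?_, ?_⟩
    · intro j
      have hjlt : j.val + 1 < k + 1 := by omega
      have hset : (Finset.univ.filter fun ic : Fin (k+1) × Fin k =>
            (if h : ic.1.val = 0 then some ic.2 else some (⟨ic.1.val - 1, by omega⟩ : Fin k)) = some j)
          = insert ((0 : Fin (k+1)), j)
              ((Finset.univ : Finset (Fin k)).image fun c => ((⟨j.val+1, hjlt⟩ : Fin (k+1)), c)) := by
        ext ⟨i, c⟩
        simp only [Finset.mem_filter, Finset.mem_univ, true_and, Finset.mem_insert,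
          Finset.mem_image, Prod.mk.injEq]
        constructor
        · intro h
          by_cases hi : i.val = 0
          · rw [dif_pos hi] at h
            left
            exact ⟨Fin.ext hi, (Option.some.injEq _ _).mp h⟩
          · rw [dif_neg hi] at h
            right
            refine ⟨c, ?_, rfl⟩
            have hc : (⟨i.val - 1, by omega⟩ : Fin k) = j := (Option.some.injEq _ _).mp h
            have hiv : i.val - 1 = j.val := by
              have := congrArg Fin.val hc; simpa using this
            exact Fin.ext (show j.val + 1 = i.val by omega)
        · intro h
          rcases h with ⟨hi, hc⟩ | ⟨c', hi, hc⟩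
          · rw [hi, hc]
            simp
          · rw [← hi]
            rw [dif_neg (show ((⟨j.val+1, hjlt⟩ : Fin (k+1)).val ≠ 0) by simp)]
            exact congrArg some (Fin.ext (by simp))
      rw [hset]
      have hnotmem : ((0 : Fin (k+1)), j) ∉
          ((Finset.univ : Finset (Fin k)).image fun c => ((⟨j.val+1, hjlt⟩ : Fin (k+1)), c)) := by
        simp only [Finset.mem_image, Prod.mk.injEq, not_exists]
        intro c ⟨_, hc, _⟩
        have := congrArg Fin.val hc
        simp at this
      have hinj : Function.Injective (fun c : Fin k => ((⟨j.val+1, hjlt⟩ : Fin (k+1)), c)) := by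
        intro a b h
        exact (Prod.mk.injEq _ _ _ _).mp h |>.2
      rw [Finset.card_insert_of_notMem hnotmem, Finset.sum_insert hnotmem,
        Finset.card_image_of_injective _ hinj, Finset.sum_image (fun a _ b _ h => hinj h)]
      have h1 : myv k ε 0 j = 1 + k*ε := by simp [myv]
      have h2 : ∀ c : Fin k, myv k ε ⟨j.val+1, hjlt⟩ j = 1 - ε := by
        intro c; unfold myv; simp
      simp only [Finset.card_univ, Fintype.card_fin]
      rw [h1]
      rw [Finset.sum_congr rfl (fun c _ => h2 c), Finset.sum_const, Finset.card_univ,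
        Fintype.card_fin, nsmul_eq_mul]
      push_cast
      ring_nf
      linarith
    · -- value computation
      have hval : unitValue (fun ic : Fin (k+1) × Fin k => myv k ε ic.1)
          (fun ic => if h : ic.1.val = 0 then some ic.2 else some ⟨ic.1.val - 1, by omega⟩)
          = (k:ℝ) * (1 + k*ε) + (k:ℝ) * ((k:ℝ) * (1-ε)) := by
        unfold unitValue
        rw [Fintype.sum_prod_type]
        have hterm : ∀ (i : Fin (k+1)) (c : Fin k),
            ((if h : (i:ℕ) = 0 then some c else some (⟨i.val - 1, by omega⟩ : Fin k)).map
              (myv k ε i)).getD 0 = if i.val = 0 then 1 + k*ε else 1 - ε := by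
          intro i c
          by_cases hi : i.val = 0
          · rw [dif_pos hi, if_pos hi]
            simp only [Option.map_some, Option.getD_some]
            unfold myv; rw [if_pos hi]
          · rw [dif_neg hi, if_neg hi]
            simp only [Option.map_some, Option.getD_some]
            unfold myv; rw [if_neg hi, if_pos (by simp; omega)]
        calc ∑ i : Fin (k+1), ∑ c : Fin k,
              ((if h : (i:ℕ) = 0 then some c else some (⟨i.val - 1, by omega⟩ : Fin k)).map
                (myv k ε i)).getD 0
            = ∑ i : Fin (k+1), ∑ _c : Fin k, (if i.val = 0 then 1 + k*ε else 1 - ε) := by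
              apply Finset.sum_congr rfl; intro i _
              apply Finset.sum_congr rfl; intro c _
              exact hterm i c
          _ = ∑ i : Fin (k+1), (k:ℝ) * (if i.val = 0 then 1 + k*ε else 1 - ε) := by
              apply Finset.sum_congr rfl; intro i _
              rw [Finset.sum_const, Finset.card_univ, Fintype.card_fin, nsmul_eq_mul]
          _ = (k:ℝ) * (1 + k*ε) + (k:ℝ) * ((k:ℝ) * (1-ε)) := by
              rw [Fin.sum_univ_succ]
              norm_num
      rw [hval]; ring_nf; linarith
  · nlinarith [hk0, hε.le]
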